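/- Let b ≥ 5 odd, q = b/2. Consider the implicit equation 1 − ((1−ξ)^b + α)^{1/2} = q (1−ξ)^{b−1} ((1−ξ)^b + α)^{−1/2} ξ near (α, ξ) = (0,0). This equation implicitly defines a function α = φ(ξ) in a neighborhood of 0 with φ(0) = 0, φ'(0) = 0, and the asymptotic α = (b(q−1)/2) ξ² + o(ξ²) as ξ → 0. -/

import Mathlib

open Real Set Filter Asymptotics Topology

namespace S8

noncomputable def c (b : ℕ) (q ξ : ℝ) : ℝ := q * (ξ * (1 - ξ) ^ (b - 1))
noncomputable def cd (b : ℕ) (q ξ : ℝ) : ℝ := q * (1 - ξ) ^ (b - 2) * (1 - b * ξ)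
noncomputable def r (b : ℕ) (q ξ : ℝ) : ℝ := Real.sqrt (1 - 4 * c b q ξ)
noncomputable def s (b : ℕ) (q ξ : ℝ) : ℝ := (1 + r b q ξ) / 2
noncomputable def phi (b : ℕ) (q ξ : ℝ) : ℝ := s b q ξ ^ 2 - (1 - ξ) ^ b
noncomputable def E (b : ℕ) (q ξ : ℝ) : ℝ :=
  (b : ℝ) * ((b : ℝ) - 1) * ξ * (1 - ξ) ^ (b - 2)
    - 4 * c b q ξ * cd b q ξ / (r b q ξ * (1 + r b q ξ))
noncomputable def G (b : ℕ) (q ξ : ℝ) : ℝ :=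
  (b : ℝ) * ((b : ℝ) - 1) * (1 - ξ) ^ (b - 2) / 2
    - 2 * q * (1 - ξ) ^ (b - 1) * cd b q ξ / (r b q ξ * (1 + r b q ξ))

lemma c_deriv (b : ℕ) (hb : 2 ≤ b) (q ξ : ℝ) : HasDerivAt (c b q) (cd b q ξ) ξ := by
  have h1 : HasDerivAt (fun x : ℝ => 1 - x) (-1) ξ := (hasDerivAt_id ξ).const_sub 1
  have h2 := ((hasDerivAt_id ξ).mul (h1.pow (b - 1))).const_mul q
  refine h2.congr_deriv ?_; symm
  have hp : (1 - ξ) ^ (b - 1) = (1 - ξ) ^ (b - 2) * (1 - ξ) := by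
    rw [← pow_succ]; congr 1; omega
  have hbc : ((b - 1 : ℕ) : ℝ) = (b : ℝ) - 1 := by
    rw [Nat.cast_sub (by omega)]; norm_num
  rw [show b - 1 - 1 = b - 2 from by omega]
  simp only [cd, id_eq, Pi.pow_apply, hp, hbc]
  ring

lemma c_cont (b : ℕ) (q : ℝ) : Continuous (c b q) := by
  unfold c; fun_prop

lemma cd_cont (b : ℕ) (q : ℝ) : Continuous (cd b q) := by
  unfold cd; fun_prop

lemma r_cont (b : ℕ) (q : ℝ) : Continuous (r b q) := by
  unfold r c; fun_prop

lemma c_zero (b : ℕ) (q : ℝ) : c b q 0 = 0 := by simp [c]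
lemma r_zero (b : ℕ) (q : ℝ) : r b q 0 = 1 := by simp [r, c]
lemma s_zero (b : ℕ) (q : ℝ) : s b q 0 = 1 := by simp [s, r_zero]
lemma phi_zero (b : ℕ) (q : ℝ) : phi b q 0 = 0 := by simp [phi, s_zero]
lemma cd_zero (b : ℕ) (q : ℝ) : cd b q 0 = q := by simp [cd]

lemma r_sq {b : ℕ} {q ξ : ℝ} (hD : 0 < 1 - 4 * c b q ξ) : r b q ξ ^ 2 = 1 - 4 * c b q ξ :=
  Real.sq_sqrt hD.le

lemma r_pos {b : ℕ} {q ξ : ℝ} (hD : 0 < 1 - 4 * c b q ξ) : 0 < r b q ξ :=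
  Real.sqrt_pos.2 hD

lemma s_pos {b : ℕ} {q ξ : ℝ} (hD : 0 < 1 - 4 * c b q ξ) : 0 < s b q ξ := by
  have := (Real.sqrt_nonneg (1 - 4 * c b q ξ))
  simp only [s, r] at *
  linarith

lemma phi_deriv {b : ℕ} (hb : 5 ≤ b) {q : ℝ} (hq : q = (b : ℝ) / 2) {ξ : ℝ}
    (hD : 0 < 1 - 4 * c b q ξ) : HasDerivAt (phi b q) (E b q ξ) ξ := by
  have h1 : HasDerivAt (fun x : ℝ => 1 - x) (-1) ξ := (hasDerivAt_id ξ).const_sub 1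
  have hc' := c_deriv b (by omega) q ξ
  have hD' : HasDerivAt (fun x => 1 - 4 * c b q x) (-(4 * cd b q ξ)) ξ :=
    (hc'.const_mul 4).const_sub 1
  have hr' : HasDerivAt (r b q) (1 / (2 * Real.sqrt (1 - 4 * c b q ξ)) * -(4 * cd b q ξ)) ξ :=
    (Real.hasDerivAt_sqrt hD.ne').comp ξ hD'
  have hs' : HasDerivAt (s b q) ((1 / (2 * Real.sqrt (1 - 4 * c b q ξ)) * -(4 * cd b q ξ)) / 2) ξ :=
    (hr'.const_add 1).div_const 2
  have hphi' := (hs'.pow 2).sub (h1.pow b)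
  refine hphi'.congr_deriv ?_; symm
  have hr0 := r_pos hD
  have hr2 := r_sq hD
  have hs0 := s_pos hD
  have h1r : 0 < 1 + r b q ξ := by linarith
  have hp1 : (1 - ξ) ^ (b - 1) = (1 - ξ) ^ (b - 2) * (1 - ξ) := by
    rw [← pow_succ]; congr 1; omega
  have hbc : ((b - 1 : ℕ) : ℝ) = (b : ℝ) - 1 := by
    rw [Nat.cast_sub (by omega)]; norm_num
  have hkey : (b : ℝ) * (1 - ξ) ^ (b - 1) - 2 * cd b q ξ
      = (b : ℝ) * ((b : ℝ) - 1) * ξ * (1 - ξ) ^ (b - 2) := by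
    rw [hp1]; simp only [cd]; subst hq; ring
  simp only [E, s] at *
  norm_num
  have hrr : Real.sqrt (1 - 4 * c b q ξ) = r b q ξ := rfl
  rw [hrr]
  field_simp
  linear_combination (-4*cd b q ξ) * hr2 + (-4*r b q ξ - 4*r b q ξ^2) * hkey

end S8

/-- the implicit equation
`1 − ((1−ξ)^b + α)^{1/2} = q (1−ξ)^{b−1} ((1−ξ)^b + α)^{−1/2} ξ`
near `(α,ξ) = (0,0)` defines a function `α = φ(ξ)` with `φ(0) = 0`, `φ'(0) = 0`,
and `φ(ξ) = (b(q−1)/2) ξ² + o(ξ²)` as `ξ → 0`, where `q = b/2`. -/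
theorem stmt8 (b : ℕ) (hb : 5 ≤ b) (hodd : Odd b) (q : ℝ) (hq : q = (b : ℝ) / 2) :
    ∃ φ : ℝ → ℝ, φ 0 = 0 ∧ HasDerivAt φ 0 0 ∧
      (∀ᶠ ξ in nhds (0:ℝ),
        1 - Real.sqrt ((1 - ξ) ^ b + φ ξ)
          = q * (1 - ξ) ^ (b - 1) * ξ / Real.sqrt ((1 - ξ) ^ b + φ ξ)) ∧
      (fun ξ : ℝ => φ ξ - ((b : ℝ) * (q - 1) / 2) * ξ ^ 2)
        =o[nhds (0:ℝ)] (fun ξ : ℝ => ξ ^ 2) := by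
  set K : ℝ := (b : ℝ) * (q - 1) / 2 with hK
  have hDpos : ∀ᶠ ξ in 𝓝 (0:ℝ), 0 < 1 - 4 * S8.c b q ξ := by
    have h2 : Continuous fun ξ => 1 - 4 * S8.c b q ξ :=
      continuous_const.sub (continuous_const.mul (S8.c_cont b q))
    have hc : Tendsto (fun ξ => 1 - 4 * S8.c b q ξ) (𝓝 0) (𝓝 1) := by
      simpa [S8.c_zero] using h2.tendsto 0
    exact hc.eventually (eventually_gt_nhds one_pos)
  have hD0 : 0 < 1 - 4 * S8.c b q 0 := by simp [S8.c_zero]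
  have hφc : Continuous (S8.phi b q) := by
    unfold S8.phi S8.s S8.r S8.c; fun_prop
  refine ⟨S8.phi b q, S8.phi_zero b q, ?_, ?_, ?_⟩
  · have h := S8.phi_deriv hb hq hD0
    have hE0 : S8.E b q 0 = 0 := by simp [S8.E, S8.c_zero]
    rwa [hE0] at h
  · filter_upwards [hDpos] with ξ hD
    have hs0 := S8.s_pos hD
    have hsum : (1 - ξ) ^ b + S8.phi b q ξ = S8.s b q ξ ^ 2 := by simp [S8.phi]
    rw [hsum, Real.sqrt_sq hs0.le, eq_div_iff hs0.ne']
    have hr2 := S8.r_sq hD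
    have hcc : S8.c b q ξ = q * (ξ * (1 - ξ) ^ (b - 1)) := rfl
    rw [hcc] at hr2
    simp only [S8.s]
    linear_combination (-1/4 : ℝ) * hr2
  · have key : Tendsto (fun ξ => S8.phi b q ξ / ξ ^ 2) (𝓝[≠] (0:ℝ)) (𝓝 K) := by
      apply HasDerivAt.lhopital_zero_nhdsNE (f' := S8.E b q) (g' := fun ξ => 2 * ξ)
      · exact eventually_nhdsWithin_of_eventually_nhds
          (hDpos.mono fun ξ hD => S8.phi_deriv hb hq hD)
      · exact Eventually.of_forall fun ξ => by simpa using hasDerivAt_pow 2 ξ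
      · filter_upwards [self_mem_nhdsWithin] with ξ (hξ : ξ ≠ (0:ℝ))
        exact mul_ne_zero two_ne_zero hξ
      · have := hφc.tendsto 0
        rw [S8.phi_zero] at this
        exact this.mono_left nhdsWithin_le_nhds
      · have : Tendsto (fun ξ : ℝ => ξ ^ 2) (𝓝 0) (𝓝 0) := by
          simpa using (continuous_pow 2).tendsto (0:ℝ)
        exact this.mono_left nhdsWithin_le_nhds
      · have hden : Continuous fun ξ => S8.r b q ξ * (1 + S8.r b q ξ) :=
          (S8.r_cont b q).mul (continuous_const.add (S8.r_cont b q))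
        have hN : Continuous fun ξ => 2 * q * (1 - ξ) ^ (b - 1) * S8.cd b q ξ := by
          have := S8.cd_cont b q; fun_prop
        have hA : Continuous fun ξ : ℝ => (b : ℝ) * ((b : ℝ) - 1) * (1 - ξ) ^ (b - 2) / 2 := by
          fun_prop
        have hGc : ContinuousAt (S8.G b q) 0 := by
          refine hA.continuousAt.sub (hN.continuousAt.div hden.continuousAt ?_)
          simp [S8.r_zero]
        have hG0 : S8.G b q 0 = K := by
          simp only [S8.G, S8.r_zero, S8.cd_zero, hK]
          rw [hq]; norm_num; ring
        have hGt : Tendsto (S8.G b q) (𝓝 0) (𝓝 K) := hG0 ▸ hGc.tendsto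
        refine (hGt.mono_left nhdsWithin_le_nhds).congr' ?_
        filter_upwards [eventually_nhdsWithin_of_eventually_nhds hDpos,
          self_mem_nhdsWithin] with ξ hD (hξ : ξ ≠ (0:ℝ))
        have hr0 := S8.r_pos hD
        have h1r : (0:ℝ) < 1 + S8.r b q ξ := by positivity
        simp only [S8.G, S8.E]
        have hcc : S8.c b q ξ = q * (ξ * (1 - ξ) ^ (b - 1)) := rfl
        rw [hcc]
        field_simp
        ring
    refine (Asymptotics.isLittleO_iff_tendsto fun x hx => ?_).2 ?_
    · have hx0 : x = 0 := sq_eq_zero_iff.1 hx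
      simp [hx0, S8.phi_zero]
    · nth_rewrite 1 [← nhdsNE_sup_pure (0:ℝ)]
      rw [tendsto_sup]
      constructor
      · have h2 : Tendsto (fun ξ => S8.phi b q ξ / ξ ^ 2 - K) (𝓝[≠] (0:ℝ)) (𝓝 (K - K)) :=
          key.sub_const K
        rw [sub_self] at h2
        refine h2.congr' ?_
        filter_upwards [self_mem_nhdsWithin] with ξ (hξ : ξ ≠ (0:ℝ))
        have hξ2 : ξ ^ 2 ≠ 0 := pow_ne_zero 2 hξ
        field_simp
      · refine tendsto_pure_left.mpr fun s hs => ?_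
        simpa [S8.phi_zero] using mem_of_mem_nhds hs
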